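/- Let q > 0, q ≠ 1, and R_q = 2/(1-q) if 0 < q < 1, R_q = 2q/(q-1) if q > 1. Then for every real x with |x| < R_q/2 such that cos_q(x) ≠ 0, setting tan_q(x) = sin_q(x)/cos_q(x), one has Cos_q(2x) = (1 − tan_q(x)²)/(1 + tan_q(x)²) and Sin_q(2x) = 2 tan_q(x)/(1 + tan_q(x)²), where Sin_q, Cos_q are the improved q-trigonometric functions built from 𝓔_q(z) = ∑_{n=0}^∞ z^n/{n}_q! and sin_q, cos_q are built from e_q(z) = ∑_{n=0}^∞ z^n/[n]_q!. -/

import Mathlib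

/-- The q-integer `[k]_q = 1 + q + q^2 + ⋯ + q^(k-1)`. -/
noncomputable def qInt (q : ℝ) (k : ℕ) : ℝ := ∑ i ∈ Finset.range k, q ^ i

/-- The q-factorial `[n]_q! = [1]_q [2]_q ⋯ [n]_q`, with `[0]_q! = 1`. -/
noncomputable def qFact (q : ℝ) (n : ℕ) : ℝ := ∏ k ∈ Finset.range n, qInt q (k + 1)

/-- The symbol `{n}_q = 2(1-q^n)/((1-q)(1+q^(n-1)))` (for `n ≥ 1`). -/
noncomputable def qBrace (q : ℝ) (n : ℕ) : ℝ :=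
  2 * (1 - q ^ n) / ((1 - q) * (1 + q ^ (n - 1)))

/-- The factorial `{n}_q! = {1}_q {2}_q ⋯ {n}_q`, with `{0}_q! = 1`. -/
noncomputable def qBraceFact (q : ℝ) (n : ℕ) : ℝ := ∏ k ∈ Finset.range n, qBrace q (k + 1)

/-- The radius `R_q = 2/(1-q)` for `0 < q < 1` and `R_q = 2q/(q-1)` for `q > 1`. -/
noncomputable def Rq (q : ℝ) : ℝ := if q < 1 then 2 / (1 - q) else 2 * q / (q - 1)

/-- The first q-exponential `e_q(z) = ∑_{n=0}^∞ z^n/[n]_q!`. -/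
noncomputable def qExp (q : ℝ) (z : ℂ) : ℂ := ∑' n : ℕ, z ^ n / (qFact q n : ℂ)

/-- The improved q-exponential function `𝓔_q(z) = ∑_{n=0}^∞ z^n/{n}_q!`. -/
noncomputable def impExp (q : ℝ) (z : ℂ) : ℂ := ∑' n : ℕ, z ^ n / (qBraceFact q n : ℂ)

/-- The standard q-sine `sin_q(x) = (e_q(ix) − e_q(−ix))/(2i)`. -/
noncomputable def qSin (q : ℝ) (x : ℝ) : ℂ :=
  (qExp q (Complex.I * x) - qExp q (-(Complex.I * x))) / (2 * Complex.I)

/-- The standard q-cosine `cos_q(x) = (e_q(ix) + e_q(−ix))/2`. -/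
noncomputable def qCos (q : ℝ) (x : ℝ) : ℂ :=
  (qExp q (Complex.I * x) + qExp q (-(Complex.I * x))) / 2

/-- The standard q-tangent `tan_q(x) = sin_q(x)/cos_q(x)`. -/
noncomputable def qTan (q : ℝ) (x : ℝ) : ℂ := qSin q x / qCos q x

/-- The improved q-sine `Sin_q(x) = (𝓔_q(ix) − 𝓔_q(−ix))/(2i)`. -/
noncomputable def impSin (q : ℝ) (x : ℝ) : ℂ :=
  (impExp q (Complex.I * x) - impExp q (-(Complex.I * x))) / (2 * Complex.I)

/-- The improved q-cosine `Cos_q(x) = (𝓔_q(ix) + 𝓔_q(−ix))/2`. -/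
noncomputable def impCos (q : ℝ) (x : ℝ) : ℂ :=
  (impExp q (Complex.I * x) + impExp q (-(Complex.I * x))) / 2

variable {q : ℝ}


lemma qInt_pos (hq : 0 < q) (k : ℕ) : 0 < qInt q (k + 1) := by
  apply Finset.sum_pos (fun i _ => pow_pos hq i)
  exact Finset.nonempty_range_iff.2 (Nat.succ_ne_zero k)


lemma qFact_pos (hq : 0 < q) (n : ℕ) : 0 < qFact q n :=
  Finset.prod_pos fun k _ => qInt_pos hq k


lemma qFact_succ (n : ℕ) : qFact q (n + 1) = qFact q n * qInt q (n + 1) :=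
  Finset.prod_range_succ _ _


lemma qInt_add (m n : ℕ) : qInt q (m + n) = qInt q m + q ^ m * qInt q n := by
  unfold qInt
  rw [Finset.sum_range_add, Finset.mul_sum]
  congr 1
  exact Finset.sum_congr rfl fun i _ => pow_add q m i


lemma qInt_one_le (hq : 0 < q) (k : ℕ) : 1 ≤ qInt q (k + 1) := by
  unfold qInt
  rw [Finset.sum_range_succ']
  simp only [pow_zero]
  have : 0 ≤ ∑ i ∈ Finset.range k, q ^ (i + 1) :=
    Finset.sum_nonneg fun i _ => le_of_lt (pow_pos hq _)
  linarith


lemma qInt_eq (hq1 : q ≠ 1) (n : ℕ) : qInt q n = (1 - q ^ n) / (1 - q) := by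
  unfold qInt
  rw [geom_sum_eq hq1]
  rw [div_eq_div_iff (by intro h; apply hq1; linarith) (by intro h; apply hq1; linarith)]
  ring


lemma qInt_mono (hq : 0 < q) : Monotone (qInt q) := by
  intro m n h
  unfold qInt
  exact Finset.sum_le_sum_of_subset_of_nonneg (Finset.range_subset_range.2 h)
    (fun i _ _ => le_of_lt (pow_pos hq i))


noncomputable def gb (q : ℝ) (n k : ℕ) : ℝ := qFact q n / (qFact q k * qFact q (n - k))


lemma gb_pascal (hq : 0 < q) {k n : ℕ} (h : k < n) :
    gb q (n + 1) (k + 1) = gb q n (k + 1) + q ^ (n - k) * gb q n k := by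
  obtain ⟨m, rfl⟩ : ∃ m, n = k + 1 + m := ⟨n - (k + 1), by omega⟩
  have h1 : k + 1 + m + 1 - (k + 1) = m + 1 := by omega
  have h2 : k + 1 + m - (k + 1) = m := by omega
  have h3 : k + 1 + m - k = m + 1 := by omega
  unfold gb
  rw [h1, h2, h3]
  have e1 : qFact q (k + 1 + m + 1) = qFact q (k + 1 + m) * qInt q (k + 1 + m + 1) :=
    qFact_succ _
  have e2 : qInt q (k + 1 + m + 1) = qInt q (m + 1) + q ^ (m + 1) * qInt q (k + 1) := by
    have := qInt_add (q := q) (m + 1) (k + 1)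
    rw [show m + 1 + (k + 1) = k + 1 + m + 1 by omega] at this
    exact this
  have e3 : qFact q (m + 1) = qFact q m * qInt q (m + 1) := qFact_succ _
  have e4 : qFact q (k + 1) = qFact q k * qInt q (k + 1) := qFact_succ _
  rw [e1, e2, e3, e4]
  have p1 := qFact_pos hq (k + 1 + m)
  have p2 := qFact_pos hq m
  have p3 := qFact_pos hq k
  have p4 := qInt_pos hq m
  have p5 := qInt_pos hq k
  field_simp


lemma qFact_zero : qFact q 0 = 1 := by unfold qFact; simp


lemma gb_zero (hq : 0 < q) (n : ℕ) : gb q n 0 = 1 := by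
  unfold gb
  rw [Nat.sub_zero, qFact_zero, one_mul, div_self (qFact_pos hq n).ne']


lemma gb_self (hq : 0 < q) (n : ℕ) : gb q n n = 1 := by
  unfold gb
  rw [Nat.sub_self, qFact_zero, mul_one, div_self (qFact_pos hq n).ne']


lemma qbinom_theorem (hq : 0 < q) (t : ℝ) (n : ℕ) :
    ∏ j ∈ Finset.range n, (1 + q ^ j * t)
      = ∑ k ∈ Finset.range (n + 1), q ^ k.choose 2 * gb q n k * t ^ k := by
  induction n with
  | zero => simp [gb, qFact]
  | succ n ih =>
    rw [Finset.prod_range_succ, ih, mul_add, mul_one]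
    have hFn : ∀ m : ℕ, qFact q m ≠ 0 := fun m => (qFact_pos hq m).ne'
    have hmul : (∑ k ∈ Finset.range (n + 1), q ^ k.choose 2 * gb q n k * t ^ k) * (q ^ n * t)
        = ∑ k ∈ Finset.range (n + 1), q ^ n * (q ^ k.choose 2 * gb q n k) * t ^ (k + 1) := by
      rw [Finset.sum_mul]
      exact Finset.sum_congr rfl fun k _ => by ring
    rw [hmul, Finset.sum_range_succ (fun k => q ^ n * (q ^ k.choose 2 * gb q n k) * t ^ (k + 1)) n,
      Finset.sum_range_succ' (fun k => q ^ k.choose 2 * gb q (n + 1) k * t ^ k) (n + 1),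
      Finset.sum_range_succ' (fun k => q ^ k.choose 2 * gb q n k * t ^ k) n]
    have hchoose : ∀ j : ℕ, (j + 1).choose 2 = j.choose 2 + j := by
      intro j
      rw [Nat.choose_succ_succ]
      norm_num [Nat.choose_one_right]
      omega
    have hlast : q ^ (n + 1).choose 2 * gb q (n + 1) (n + 1) * t ^ (n + 1)
        = q ^ n * (q ^ n.choose 2 * gb q n n) * t ^ (n + 1) := by
      rw [gb_self hq, gb_self hq, hchoose n]; ring
    have hmid : ∀ j ∈ Finset.range n,
        q ^ (j + 1).choose 2 * gb q (n + 1) (j + 1) * t ^ (j + 1)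
          = q ^ (j + 1).choose 2 * gb q n (j + 1) * t ^ (j + 1)
            + q ^ n * (q ^ j.choose 2 * gb q n j) * t ^ (j + 1) := by
      intro j hj
      rw [Finset.mem_range] at hj
      rw [gb_pascal hq hj, hchoose j]
      have key : q ^ (j.choose 2 + j) * q ^ (n - j) = q ^ n * q ^ j.choose 2 := by
        rw [← pow_add, ← pow_add]
        congr 1
        omega
      linear_combination t ^ (j + 1) * gb q n j * key
    rw [Finset.sum_range_succ (fun k => q ^ (k + 1).choose 2 * gb q (n + 1) (k + 1) * t ^ (k + 1)) n,
      Finset.sum_congr rfl hmid, Finset.sum_add_distrib, hlast, gb_zero hq, gb_zero hq]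
    ring


lemma one_sub_ne (hq1 : q ≠ 1) : (1 : ℝ) - q ≠ 0 := fun h => hq1 (by linarith)


lemma prodq_pos (hq : 0 < q) (n : ℕ) : 0 < ∏ j ∈ Finset.range n, (1 + q ^ j) :=
  Finset.prod_pos fun j _ => by positivity


lemma qbinom_one (hq : 0 < q) (n : ℕ) :
    ∑ k ∈ Finset.range (n + 1), q ^ k.choose 2 * gb q n k
      = ∏ j ∈ Finset.range n, (1 + q ^ j) := by
  have := qbinom_theorem hq 1 n
  simp only [mul_one, one_pow] at this
  exact this.symm


lemma qbinom_negone (hq : 0 < q) {n : ℕ} (hn : n ≠ 0) :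
    ∑ k ∈ Finset.range (n + 1), q ^ k.choose 2 * gb q n k * (-1 : ℝ) ^ k = 0 := by
  rw [← qbinom_theorem hq (-1) n]
  apply Finset.prod_eq_zero (Finset.mem_range.2 (Nat.pos_of_ne_zero hn))
  simp


lemma qBrace_eq (hq : 0 < q) (hq1 : q ≠ 1) (n : ℕ) :
    qBrace q (n + 1) = 2 * qInt q (n + 1) / (1 + q ^ n) := by
  unfold qBrace
  rw [qInt_eq hq1]
  have h1 : (1 : ℝ) - q ≠ 0 := one_sub_ne hq1
  have h2 : (0 : ℝ) < 1 + q ^ n := by positivity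
  rw [Nat.add_sub_cancel]
  field_simp


lemma qBraceFact_eq (hq : 0 < q) (hq1 : q ≠ 1) (n : ℕ) :
    qBraceFact q n = 2 ^ n * qFact q n / ∏ j ∈ Finset.range n, (1 + q ^ j) := by
  induction n with
  | zero => simp [qBraceFact, qFact_zero]
  | succ n ih =>
    unfold qBraceFact at ih ⊢
    rw [Finset.prod_range_succ, ih, qBrace_eq hq hq1, qFact_succ,
      Finset.prod_range_succ]
    have h2 : (0 : ℝ) < 1 + q ^ n := by positivity
    have h3 := prodq_pos hq n
    field_simp
    ring


lemma qBraceFact_pos (hq : 0 < q) (hq1 : q ≠ 1) (n : ℕ) : 0 < qBraceFact q n := by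
  rw [qBraceFact_eq hq hq1]
  have := qFact_pos hq n
  have := prodq_pos hq n
  positivity


lemma gb_reflect_one (hq : 0 < q) (n : ℕ) :
    ∑ k ∈ Finset.range (n + 1), q ^ ((n - k).choose 2) * gb q n (n - k)
      = ∏ j ∈ Finset.range n, (1 + q ^ j) := by
  have h := Finset.sum_range_reflect (fun k => q ^ k.choose 2 * gb q n k) (n + 1)
  simp only [Nat.add_sub_cancel] at h
  rw [h, qbinom_one hq]


lemma gb_reflect_negone (hq : 0 < q) {n : ℕ} (hn : n ≠ 0) :
    ∑ k ∈ Finset.range (n + 1),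
      q ^ ((n - k).choose 2) * gb q n (n - k) * (-1 : ℝ) ^ (n - k) = 0 := by
  have h := Finset.sum_range_reflect
    (fun k => q ^ k.choose 2 * gb q n k * (-1 : ℝ) ^ k) (n + 1)
  simp only [Nat.add_sub_cancel] at h
  rw [h, qbinom_negone hq hn]


lemma coeff1 (hq : 0 < q) (hq1 : q ≠ 1) (n : ℕ) :
    ∑ k ∈ Finset.range (n + 1), q ^ ((n - k).choose 2) / (qFact q k * qFact q (n - k))
      = 2 ^ n / qBraceFact q n := by
  have hFn := (qFact_pos hq n).ne'
  have hstep : ∀ k ∈ Finset.range (n + 1),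
      q ^ ((n - k).choose 2) / (qFact q k * qFact q (n - k))
        = q ^ ((n - k).choose 2) * gb q n (n - k) / qFact q n := by
    intro k hk
    rw [Finset.mem_range] at hk
    unfold gb
    rw [Nat.sub_sub_self (by omega)]
    have h1 := (qFact_pos hq k).ne'
    have h2 := (qFact_pos hq (n - k)).ne'
    field_simp
  rw [Finset.sum_congr rfl hstep, ← Finset.sum_div, gb_reflect_one hq,
    qBraceFact_eq hq hq1]
  have h3 := (prodq_pos hq n).ne'
  have h4 : (2 : ℝ) ^ n ≠ 0 := by positivity
  field_simp


lemma coeff2 (hq : 0 < q) {n : ℕ} (hn : n ≠ 0) :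
    ∑ k ∈ Finset.range (n + 1),
      (-1 : ℝ) ^ (n - k) * q ^ ((n - k).choose 2) / (qFact q k * qFact q (n - k)) = 0 := by
  have hFn := (qFact_pos hq n).ne'
  have hstep : ∀ k ∈ Finset.range (n + 1),
      (-1 : ℝ) ^ (n - k) * q ^ ((n - k).choose 2) / (qFact q k * qFact q (n - k))
        = q ^ ((n - k).choose 2) * gb q n (n - k) * (-1 : ℝ) ^ (n - k) / qFact q n := by
    intro k hk
    rw [Finset.mem_range] at hk
    unfold gb
    rw [Nat.sub_sub_self (by omega)]
    have h1 := (qFact_pos hq k).ne'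
    have h2 := (qFact_pos hq (n - k)).ne'
    field_simp
  rw [Finset.sum_congr rfl hstep, ← Finset.sum_div, gb_reflect_negone hq hn, zero_div]


noncomputable def Eexp (q : ℝ) (z : ℂ) : ℂ :=
  ∑' n : ℕ, (q : ℂ) ^ n.choose 2 * z ^ n / (qFact q n : ℂ)


lemma qInt_ge_pow (hq : 0 < q) (n : ℕ) : q ^ n ≤ qInt q (n + 1) := by
  unfold qInt
  exact Finset.single_le_sum (fun i _ => le_of_lt (pow_pos hq i))
    (Finset.mem_range.2 (Nat.lt_succ_self n))


lemma ratio_a (hq : 0 < q) (hq1 : q ≠ 1) {z : ℂ} (hz : ‖z‖ < Rq q / 2) :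
    ∃ N : ℕ, ∃ r : ℝ, r < 1 ∧ 0 ≤ r ∧ ∀ n, N ≤ n → ‖z‖ ≤ r * qInt q (n + 1) := by
  rcases lt_or_gt_of_ne hq1 with hlt | hgt
  · -- q < 1
    rw [Rq, if_pos hlt] at hz
    have h1q : (0:ℝ) < 1 - q := by linarith
    rw [show (2:ℝ) / (1 - q) / 2 = 1 / (1 - q) by ring] at hz
    have hz' : ‖z‖ * (1 - q) < 1 := by
      have := (lt_div_iff₀ h1q).1 hz
      linarith
    set ε : ℝ := 1 - ‖z‖ * (1 - q) with hε
    have hεpos : 0 < ε := by linarith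
    obtain ⟨N, hN⟩ := exists_pow_lt_of_lt_one hεpos hlt
    have hNz : ‖z‖ < qInt q N := by
      rw [qInt_eq hq1, lt_div_iff₀ h1q]
      have : ‖z‖ * (1 - q) = 1 - ε := by rw [hε]; ring
      linarith
    have hNpos : 0 < qInt q N := lt_of_le_of_lt (norm_nonneg z) hNz
    refine ⟨N, ‖z‖ / qInt q N, (div_lt_one hNpos).2 hNz,
      div_nonneg (norm_nonneg z) hNpos.le, fun n hn => ?_⟩
    have hmono : qInt q N ≤ qInt q (n + 1) := qInt_mono hq (by omega)
    rw [div_mul_eq_mul_div, le_div_iff₀ hNpos]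
    have := mul_le_mul_of_nonneg_left hmono (norm_nonneg z)
    linarith
  · -- q > 1
    obtain ⟨N, hN⟩ := pow_unbounded_of_one_lt (2 * ‖z‖) hgt
    refine ⟨N, 1 / 2, by norm_num, by norm_num, fun n hn => ?_⟩
    have h1 : q ^ N ≤ q ^ n := pow_le_pow_right₀ hgt.le hn
    have h2 : q ^ n ≤ qInt q (n + 1) := qInt_ge_pow hq n
    linarith


lemma ratio_b (hq : 0 < q) (hq1 : q ≠ 1) {z : ℂ} (hz : ‖z‖ < Rq q / 2) :
    ∃ N : ℕ, ∃ r : ℝ, r < 1 ∧ 0 ≤ r ∧ ∀ n, N ≤ n → q ^ n * ‖z‖ ≤ r * qInt q (n + 1) := by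
  rcases lt_or_gt_of_ne hq1 with hlt | hgt
  · -- q < 1 : q^n ‖z‖ → 0
    have hpos : (0:ℝ) < (1/2) / (‖z‖ + 1) := by positivity
    obtain ⟨N, hN⟩ := exists_pow_lt_of_lt_one hpos hlt
    refine ⟨N, 1 / 2, by norm_num, by norm_num, fun n hn => ?_⟩
    have h1 : q ^ n ≤ q ^ N := pow_le_pow_of_le_one hq.le hlt.le hn
    have h2 : (1:ℝ) ≤ qInt q (n + 1) := qInt_one_le hq n
    have h3 : q ^ n * ‖z‖ ≤ q ^ N * (‖z‖ + 1) := by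
      have := pow_pos hq n
      have := pow_pos hq N
      nlinarith [norm_nonneg z]
    have h4 : q ^ N * (‖z‖ + 1) < 1 / 2 :=
      (lt_div_iff₀ (by positivity : (0:ℝ) < ‖z‖ + 1)).1 hN
    nlinarith
  · -- q > 1
    rw [Rq, if_neg (by linarith)] at hz
    have hq1' : (0:ℝ) < q - 1 := by linarith
    rw [show (2:ℝ) * q / (q - 1) / 2 = q / (q - 1) by ring] at hz
    have hzq : ‖z‖ * (q - 1) < q := (lt_div_iff₀ hq1').1 hz
    set r : ℝ := (‖z‖ * (q - 1) / q + 1) / 2 with hr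
    have hr1 : r < 1 := by
      rw [hr]
      have : ‖z‖ * (q - 1) / q < 1 := (div_lt_one (by linarith)).2 hzq
      linarith
    have hr0 : 0 ≤ r := by
      have : 0 ≤ ‖z‖ * (q - 1) / q := by positivity
      rw [hr]; linarith
    set δ : ℝ := r * q - ‖z‖ * (q - 1) with hδ
    have hδpos : 0 < δ := by
      have hq0 : (0:ℝ) < q := by linarith
      have hrq : r * q = (‖z‖ * (q - 1) + q) / 2 := by
        rw [hr]; field_simp
      rw [hδ, hrq]; linarith
    obtain ⟨N, hN⟩ := pow_unbounded_of_one_lt (r / δ) hgt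
    refine ⟨N, r, hr1, hr0, fun n hn => ?_⟩
    have h1 : q ^ N ≤ q ^ n := pow_le_pow_right₀ hgt.le hn
    have h2 : r / δ < q ^ n := lt_of_lt_of_le hN h1
    have h3 : r ≤ δ * q ^ n := by
      rw [div_lt_iff₀ hδpos] at h2
      nlinarith
    have hqint : qInt q (n + 1) = (q ^ (n + 1) - 1) / (q - 1) := by
      rw [qInt_eq hq1]
      rw [div_eq_div_iff (by linarith : (1:ℝ) - q ≠ 0) hq1'.ne']
      ring
    rw [hqint, mul_div_assoc', le_div_iff₀ hq1']
    have hps : q ^ (n + 1) = q ^ n * q := pow_succ q n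
    nlinarith [pow_pos hq n]


lemma choose_two_succ (j : ℕ) : (j + 1).choose 2 = j.choose 2 + j := by
  rw [Nat.choose_succ_succ]
  norm_num [Nat.choose_one_right]
  omega


lemma summable_norm_a (hq : 0 < q) (hq1 : q ≠ 1) {z : ℂ} (hz : ‖z‖ < Rq q / 2) :
    Summable fun n : ℕ => ‖z ^ n / (qFact q n : ℂ)‖ := by
  obtain ⟨N, r, hr1, hr0, hb⟩ := ratio_a hq hq1 hz
  have e : (fun n : ℕ => ‖z ^ n / (qFact q n : ℂ)‖) = fun n => ‖z‖ ^ n / qFact q n := by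
    funext m
    rw [norm_div, norm_pow, Complex.norm_real, Real.norm_of_nonneg (qFact_pos hq m).le]
  rw [e]
  apply summable_of_ratio_norm_eventually_le hr1
  filter_upwards [Filter.eventually_ge_atTop N] with n hn
  have hF := qFact_pos hq n
  have hI := qInt_pos hq n
  have hg : ∀ m, 0 ≤ ‖z‖ ^ m / qFact q m :=
    fun m => div_nonneg (pow_nonneg (norm_nonneg z) m) (qFact_pos hq m).le
  rw [Real.norm_of_nonneg (hg (n + 1)), Real.norm_of_nonneg (hg n), pow_succ, qFact_succ,
    div_le_iff₀ (by positivity)]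
  have heq : r * (‖z‖ ^ n / qFact q n) * (qFact q n * qInt q (n + 1))
      = ‖z‖ ^ n * (r * qInt q (n + 1)) := by
    field_simp
  rw [heq]
  exact mul_le_mul_of_nonneg_left (hb n hn) (pow_nonneg (norm_nonneg z) n)


lemma summable_norm_b (hq : 0 < q) (hq1 : q ≠ 1) {z : ℂ} (hz : ‖z‖ < Rq q / 2) :
    Summable fun n : ℕ => ‖(q : ℂ) ^ n.choose 2 * z ^ n / (qFact q n : ℂ)‖ := by
  obtain ⟨N, r, hr1, hr0, hb⟩ := ratio_b hq hq1 hz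
  have e : (fun n : ℕ => ‖(q : ℂ) ^ n.choose 2 * z ^ n / (qFact q n : ℂ)‖)
      = fun n => q ^ n.choose 2 * ‖z‖ ^ n / qFact q n := by
    funext m
    rw [norm_div, norm_mul, norm_pow, norm_pow, Complex.norm_real, Complex.norm_real,
      Real.norm_of_nonneg (qFact_pos hq m).le, Real.norm_of_nonneg hq.le]
  rw [e]
  apply summable_of_ratio_norm_eventually_le hr1
  filter_upwards [Filter.eventually_ge_atTop N] with n hn
  have hF := qFact_pos hq n
  have hI := qInt_pos hq n
  have hqp : (0:ℝ) < q ^ n.choose 2 := pow_pos hq _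
  have hg : ∀ m, 0 ≤ q ^ m.choose 2 * ‖z‖ ^ m / qFact q m := fun m =>
    div_nonneg (mul_nonneg (pow_nonneg hq.le _) (pow_nonneg (norm_nonneg z) m))
      (qFact_pos hq m).le
  rw [Real.norm_of_nonneg (hg (n + 1)), Real.norm_of_nonneg (hg n), pow_succ, qFact_succ,
    choose_two_succ, pow_add, div_le_iff₀ (by positivity)]
  have heq : r * (q ^ n.choose 2 * ‖z‖ ^ n / qFact q n) * (qFact q n * qInt q (n + 1))
      = q ^ n.choose 2 * ‖z‖ ^ n * (r * qInt q (n + 1)) := by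
    field_simp
  rw [heq]
  have : q ^ n.choose 2 * q ^ n * (‖z‖ ^ n * ‖z‖)
      = q ^ n.choose 2 * ‖z‖ ^ n * (q ^ n * ‖z‖) := by ring
  rw [this]
  exact mul_le_mul_of_nonneg_left (hb n hn)
    (mul_nonneg (pow_nonneg hq.le _) (pow_nonneg (norm_nonneg z) n))


lemma cauchy_key1 (hq : 0 < q) (hq1 : q ≠ 1) {z : ℂ} (hz : ‖z‖ < Rq q / 2) :
    qExp q z * Eexp q z = impExp q (2 * z) := by
  unfold qExp Eexp impExp
  rw [tsum_mul_tsum_eq_tsum_sum_range_of_summable_norm (summable_norm_a hq hq1 hz)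
    (summable_norm_b hq hq1 hz)]
  apply tsum_congr
  intro n
  have hterm : ∀ k ∈ Finset.range (n + 1),
      z ^ k / (qFact q k : ℂ) * ((q : ℂ) ^ (n - k).choose 2 * z ^ (n - k) / (qFact q (n - k) : ℂ))
        = ((q ^ (n - k).choose 2 / (qFact q k * qFact q (n - k)) : ℝ) : ℂ) * z ^ n := by
    intro k hk
    rw [Finset.mem_range] at hk
    have hzz : z ^ k * z ^ (n - k) = z ^ n := by
      rw [← pow_add]
      congr 1
      omega
    have h1 : ((qFact q k : ℝ) : ℂ) ≠ 0 := by
      exact_mod_cast Complex.ofReal_ne_zero.2 (qFact_pos hq k).ne'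
    have h2 : ((qFact q (n - k) : ℝ) : ℂ) ≠ 0 :=
      Complex.ofReal_ne_zero.2 (qFact_pos hq (n - k)).ne'
    push_cast
    field_simp
    rw [← hzz]
    ring
  rw [Finset.sum_congr rfl hterm, ← Finset.sum_mul, ← Complex.ofReal_sum,
    coeff1 hq hq1 n]
  have hB : ((qBraceFact q n : ℝ) : ℂ) ≠ 0 :=
    Complex.ofReal_ne_zero.2 (qBraceFact_pos hq hq1 n).ne'
  push_cast
  rw [mul_pow]
  field_simp


lemma cauchy_key2 (hq : 0 < q) (hq1 : q ≠ 1) {z : ℂ} (hz : ‖z‖ < Rq q / 2) :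
    qExp q z * Eexp q (-z) = 1 := by
  unfold qExp Eexp
  have hzn : ‖-z‖ < Rq q / 2 := by rwa [norm_neg]
  rw [tsum_mul_tsum_eq_tsum_sum_range_of_summable_norm (summable_norm_a hq hq1 hz)
    (summable_norm_b hq hq1 hzn)]
  have hterm : ∀ n : ℕ, ∀ k ∈ Finset.range (n + 1),
      z ^ k / (qFact q k : ℂ)
          * ((q : ℂ) ^ (n - k).choose 2 * (-z) ^ (n - k) / (qFact q (n - k) : ℂ))
        = (((-1 : ℝ) ^ (n - k) * q ^ (n - k).choose 2 / (qFact q k * qFact q (n - k)) : ℝ) : ℂ)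
            * z ^ n := by
    intro n k hk
    rw [Finset.mem_range] at hk
    have hzz : z ^ k * z ^ (n - k) = z ^ n := by
      rw [← pow_add]
      congr 1
      omega
    have h1 : ((qFact q k : ℝ) : ℂ) ≠ 0 := Complex.ofReal_ne_zero.2 (qFact_pos hq k).ne'
    have h2 : ((qFact q (n - k) : ℝ) : ℂ) ≠ 0 :=
      Complex.ofReal_ne_zero.2 (qFact_pos hq (n - k)).ne'
    rw [neg_pow]
    push_cast
    field_simp
    rw [← hzz]
    ring
  have hsum : ∀ n : ℕ, ∑ k ∈ Finset.range (n + 1),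
      z ^ k / (qFact q k : ℂ)
        * ((q : ℂ) ^ (n - k).choose 2 * (-z) ^ (n - k) / (qFact q (n - k) : ℂ))
      = if n = 0 then 1 else 0 := by
    intro n
    rw [Finset.sum_congr rfl (hterm n), ← Finset.sum_mul, ← Complex.ofReal_sum]
    rcases Nat.eq_zero_or_pos n with rfl | hn
    · simp [qFact_zero]
    · rw [coeff2 hq hn.ne']
      simp [hn.ne']
  rw [tsum_congr hsum]
  rw [tsum_eq_single 0 (fun b hb => by simp [hb])]
  simp


/-- For `|x| < R_q/2` with `cos_q(x) ≠ 0`: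
`Cos_q(2x) = (1 − tan_q(x)²)/(1 + tan_q(x)²)` and
`Sin_q(2x) = 2 tan_q(x)/(1 + tan_q(x)²)`. -/
theorem improved_qTrig_tan_formulas (q : ℝ) (hq : 0 < q) (hq1 : q ≠ 1) (x : ℝ)
    (hx : |x| < Rq q / 2) (hcos : qCos q x ≠ 0) :
    impCos q (2 * x) = (1 - qTan q x ^ 2) / (1 + qTan q x ^ 2) ∧
    impSin q (2 * x) = 2 * qTan q x / (1 + qTan q x ^ 2) := by
  have hznorm : ‖Complex.I * (x : ℂ)‖ < Rq q / 2 := by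
    rw [norm_mul, Complex.norm_I, one_mul, Complex.norm_real, Real.norm_eq_abs]
    exact hx
  have hzn : ‖-(Complex.I * (x : ℂ))‖ < Rq q / 2 := by rwa [norm_neg]
  set a := qExp q (Complex.I * (x : ℂ)) with hadef
  set b := qExp q (-(Complex.I * (x : ℂ))) with hbdef
  set A := Eexp q (Complex.I * (x : ℂ)) with hAdef
  set B := Eexp q (-(Complex.I * (x : ℂ))) with hBdef
  have hab1 : a * B = 1 := cauchy_key2 hq hq1 hznorm
  have hab2 : b * A = 1 := by
    have h := cauchy_key2 hq hq1 hzn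
    rwa [neg_neg] at h
  have ha : a ≠ 0 := left_ne_zero_of_mul_eq_one hab1
  have hb : b ≠ 0 := left_ne_zero_of_mul_eq_one hab2
  have hA : A = b⁻¹ := eq_inv_of_mul_eq_one_right hab2
  have hB : B = a⁻¹ := eq_inv_of_mul_eq_one_right hab1
  have hsum : a + b ≠ 0 := by
    intro h
    apply hcos
    unfold qCos
    rw [← hadef, ← hbdef, h, zero_div]
  have e2x : Complex.I * ((2 * x : ℝ) : ℂ) = 2 * (Complex.I * (x : ℂ)) := by
    push_cast
    ring
  have e2x' : -(2 * (Complex.I * (x : ℂ))) = 2 * -(Complex.I * (x : ℂ)) := by ring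
  have h1 : impExp q (2 * (Complex.I * (x : ℂ))) = a * A := (cauchy_key1 hq hq1 hznorm).symm
  have h2 : impExp q (2 * -(Complex.I * (x : ℂ))) = b * B := (cauchy_key1 hq hq1 hzn).symm
  have htan : qTan q x = (a - b) / (Complex.I * (a + b)) := by
    unfold qTan qSin qCos
    rw [← hadef, ← hbdef]
    field_simp
  have hden : 1 + qTan q x ^ 2 = 4 * a * b / (a + b) ^ 2 := by
    rw [htan, div_pow, mul_pow, Complex.I_sq]
    field_simp
    ring
  have hnum : 1 - qTan q x ^ 2 = 2 * (a ^ 2 + b ^ 2) / (a + b) ^ 2 := by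
    rw [htan, div_pow, mul_pow, Complex.I_sq]
    field_simp
    ring
  have hdenne : 1 + qTan q x ^ 2 ≠ 0 := by
    rw [hden]
    exact div_ne_zero (by simp [ha, hb]) (pow_ne_zero 2 hsum)
  constructor
  · unfold impCos
    rw [e2x, e2x', h1, h2, hA, hB, hnum, hden]
    field_simp
    ring
  · unfold impSin
    rw [e2x, e2x', h1, h2, hA, hB, hden, htan]
    field_simp
    ring
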